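/- If the sequence (A_m)_{m∈ℤ} admits an exponential dichotomy (i.e., the central projections P_n^3 vanish) and 4cD‖G‖ < 1, then there exists L > 0 such that for every ε > 0 and every (δ,B)-pseudotrajectory y = (y_n) with δ = Lε, there exists a unique genuine solution x = (x_n) of x_{n+1} = F_n(x_n) with ‖x − y‖_B ≤ ε. -/

import Mathlib

/-- A Banach sequence space over ℤ: a linear subspace of all real sequences indexed
by ℤ, equipped with a complete norm which is solid. -/
structure BanachSeqSpace where
  /-- membership in the subspace -/
  mem : (ℤ → ℝ) → Prop
  /-- the norm -/
  N : (ℤ → ℝ) → ℝ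
  zero_mem : mem 0
  add_mem : ∀ s t, mem s → mem t → mem (s + t)
  smul_mem : ∀ (a : ℝ) (s), mem s → mem (a • s)
  N_nonneg : ∀ s, 0 ≤ N s
  N_zero : N 0 = 0
  N_eq_zero : ∀ s, mem s → N s = 0 → s = 0
  N_add : ∀ s t, mem s → mem t → N (s + t) ≤ N s + N t
  N_smul : ∀ (a : ℝ) (s), mem s → N (a • s) = |a| * N s
  /-- solidity: if |s n| ≤ |t n| for all n and t belongs to the space,
  then so does s, with N s ≤ N t -/
  solid : ∀ s t, mem t → (∀ n : ℤ, |s n| ≤ |t n|) → mem s ∧ N s ≤ N t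
  /-- completeness: every Cauchy sequence in the space converges in the space -/
  complete : ∀ u : ℕ → (ℤ → ℝ), (∀ k, mem (u k)) →
    (∀ ε > (0 : ℝ), ∃ K : ℕ, ∀ j ≥ K, ∀ k ≥ K, N (u j - u k) ≤ ε) →
    ∃ v, mem v ∧ ∀ ε > (0 : ℝ), ∃ K : ℕ, ∀ k ≥ K, N (u k - v) ≤ ε

/-- An admissible Banach sequence space: additionally contains all singleton indicator
sequences with positive norm and is invariant under shifts, which act isometrically. -/
structure AdmissibleBSS extends BanachSeqSpace where
  indicator_mem : ∀ n : ℤ, mem (fun k => if k = n then (1 : ℝ) else 0)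
  indicator_pos : ∀ n : ℤ, 0 < N (fun k => if k = n then (1 : ℝ) else 0)
  shift_mem : ∀ (s : ℤ → ℝ) (m : ℤ), mem s → mem (fun n => s (n + m))
  shift_isometry : ∀ (s : ℤ → ℝ) (m : ℤ), mem s → N (fun n => s (n + m)) = N s
variable {X : Type*} [NormedAddCommGroup X] [NormedSpace ℝ X]

/-- The forward cocycle: `fcoc A n k = A (n+k-1) ∘ ⋯ ∘ A n`, so that
`fcoc A n k = 𝒜(n+k, n)`. -/
def fcoc (A : ℤ → X →L[ℝ] X) (n : ℤ) : ℕ → (X →L[ℝ] X)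
  | 0 => ContinuousLinearMap.id ℝ X
  | (k + 1) => (A (n + k)).comp (fcoc A n k)

/-- A partial exponential dichotomy for a sequence `(A_m)_{m ∈ ℤ}` of bounded linear
operators: projections `P¹, P², P³` summing to the identity and commuting with the
dynamics, with the dynamics invertible along the unstable direction (witnessed by the
backward cocycle `V m n = 𝒜(m,n)P_n²` for `m ≤ n`), and exponential bounds. -/
structure PartialDichotomy (A : ℤ → X →L[ℝ] X) where
  P1 : ℤ → X →L[ℝ] X
  P2 : ℤ → X →L[ℝ] X
  P3 : ℤ → X →L[ℝ] X
  D : ℝ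
  b : ℝ
  d : ℝ
  hD : 0 < D
  hb : 0 < b
  hd : 0 < d
  proj1 : ∀ n, (P1 n).comp (P1 n) = P1 n
  proj2 : ∀ n, (P2 n).comp (P2 n) = P2 n
  proj3 : ∀ n, (P3 n).comp (P3 n) = P3 n
  sum_eq : ∀ n (x : X), P1 n x + P2 n x + P3 n x = x
  comm1 : ∀ n, (A n).comp (P1 n) = (P1 (n + 1)).comp (A n)
  comm2 : ∀ n, (A n).comp (P2 n) = (P2 (n + 1)).comp (A n)
  comm3 : ∀ n, (A n).comp (P3 n) = (P3 (n + 1)).comp (A n)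
  /-- the backward cocycle along the unstable direction, `V m n = 𝒜(m,n)P_n²` for `m ≤ n` -/
  V : ℤ → ℤ → X →L[ℝ] X
  V_self : ∀ n, V n n = P2 n
  V_proj : ∀ m n, m ≤ n → (V m n).comp (P2 n) = V m n
  V_range : ∀ m n, m ≤ n → (P2 m).comp (V m n) = V m n
  /-- `𝒜(n,m) ∘ 𝒜(m,n)P_n² = P_n²`: `V m n` inverts the forward dynamics -/
  V_right_inv : ∀ m n, m ≤ n → (fcoc A m (n - m).toNat).comp (V m n) = P2 n
  /-- `𝒜(m,n) ∘ 𝒜(n,m)P_m² = P_m²` -/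
  V_left_inv : ∀ m n, m ≤ n → (V m n).comp ((fcoc A m (n - m).toNat).comp (P2 m)) = P2 m
  /-- `‖𝒜(m,n)P_n¹‖ ≤ D e^{-d(m-n)}` for `m ≥ n` -/
  bound1 : ∀ (n : ℤ) (k : ℕ), ‖(fcoc A n k).comp (P1 n)‖ ≤ D * Real.exp (-d * k)
  /-- `‖𝒜(m,n)P_n²‖ ≤ D e^{-b(n-m)}` for `m ≤ n` -/
  bound2 : ∀ m n, m ≤ n → ‖V m n‖ ≤ D * Real.exp (-b * (n - m))

/-- Membership in `X_B`: the sequence of norms belongs to `B`. -/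
def memXB (B : BanachSeqSpace) (x : ℤ → X) : Prop := B.mem (fun n => ‖x n‖)

/-- The norm on `X_B`. -/
def NXB (B : BanachSeqSpace) (x : ℤ → X) : ℝ := B.N (fun n => ‖x n‖)

/-- Membership in the stable-unstable subspace `X_B^{s,u}`. -/
def memXBsu (B : BanachSeqSpace) {A : ℤ → X →L[ℝ] X} (pd : PartialDichotomy A)
    (x : ℤ → X) : Prop :=
  memXB B x ∧ ∀ n : ℤ, x n = pd.P1 n (x n) + pd.P2 n (x n)

/-- The central component `x^c` of a sequence: `(x^c)_n = P_n³ x_n`. -/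
def centr {A : ℤ → X →L[ℝ] X} (pd : PartialDichotomy A) (x : ℤ → X) : ℤ → X :=
  fun n => pd.P3 n (x n)

/-- The stable-unstable component `x^{s,u}` of a sequence: `(x^{s,u})_n = x_n − P_n³ x_n`. -/
def stun {A : ℤ → X →L[ℝ] X} (pd : PartialDichotomy A) (x : ℤ → X) : ℤ → X :=
  fun n => x n - pd.P3 n (x n)

/-- The adapted norm `‖x‖'_B = max{‖x^c‖_B, ‖x^{s,u}‖_B}` on `X_B`. -/
def Nadapt (B : BanachSeqSpace) {A : ℤ → X →L[ℝ] X} (pd : PartialDichotomy A)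
    (x : ℤ → X) : ℝ :=
  max (NXB B (centr pd x)) (NXB B (stun pd x))

-- AUXILIARY LEMMAS
lemma BanachSeqSpace.mem_sub (B : BanachSeqSpace) {s t : ℤ → ℝ} (hs : B.mem s) (ht : B.mem t) :
    B.mem (s - t) := by
  have h : s - t = s + (-1 : ℝ) • t := by funext n; simp [sub_eq_add_neg]
  rw [h]
  exact B.add_mem _ _ hs (B.smul_mem _ _ ht)

lemma BanachSeqSpace.N_sub_rev (B : BanachSeqSpace) {s t : ℤ → ℝ} (hs : B.mem s) (ht : B.mem t) :
    B.N (s - t) = B.N (t - s) := by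
  have h : s - t = (-1 : ℝ) • (t - s) := by funext n; simp [Pi.sub_apply]
  rw [h, B.N_smul _ _ (B.mem_sub ht hs)]; simp

lemma memXB_of_dom (B : BanachSeqSpace) (x : ℤ → X) (t : ℤ → ℝ) (ht : B.mem t)
    (h : ∀ n, ‖x n‖ ≤ t n) : memXB B x ∧ NXB B x ≤ B.N t :=
  B.solid (fun n => ‖x n‖) t ht (fun n => by
    rw [abs_norm]; exact (h n).trans (le_abs_self _))

lemma memXB_zero (B : BanachSeqSpace) : memXB B (0 : ℤ → X) := by
  have h : (fun n : ℤ => ‖(0 : ℤ → X) n‖) = (0 : ℤ → ℝ) := by funext n; simp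
  unfold memXB; rw [h]; exact B.zero_mem

lemma NXB_nonneg (B : BanachSeqSpace) (x : ℤ → X) : 0 ≤ NXB B x := B.N_nonneg _

lemma NXB_zero (B : BanachSeqSpace) : NXB B (0 : ℤ → X) = 0 := by
  have h : (fun n : ℤ => ‖(0 : ℤ → X) n‖) = (0 : ℤ → ℝ) := by funext n; simp
  unfold NXB; rw [h]; exact B.N_zero

lemma memXB_sub (B : BanachSeqSpace) {x y : ℤ → X} (hx : memXB B x) (hy : memXB B y) :
    memXB B (x - y) :=
  (memXB_of_dom B (x - y) ((fun n => ‖x n‖) + fun n => ‖y n‖)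
    (B.add_mem _ _ hx hy) (fun n => by
      simpa using norm_sub_le (x n) (y n))).1

lemma NXB_add_le (B : BanachSeqSpace) {x y : ℤ → X} (hx : memXB B x) (hy : memXB B y) :
    NXB B (x + y) ≤ NXB B x + NXB B y := by
  have h := memXB_of_dom B (x + y) ((fun n => ‖x n‖) + fun n => ‖y n‖)
    (B.add_mem _ _ hx hy) (fun n => by simpa using norm_add_le (x n) (y n))
  exact h.2.trans (B.N_add _ _ hx hy)

lemma NXB_sub_rev (B : BanachSeqSpace) (x y : ℤ → X) : NXB B (x - y) = NXB B (y - x) := by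
  unfold NXB; congr 1; funext n; simp [Pi.sub_apply, norm_sub_rev]

lemma abs_apply_le (B : AdmissibleBSS) {s : ℤ → ℝ} (hs : B.mem s) (n₀ : ℤ) :
    B.N (fun k => if k = n₀ then (1:ℝ) else 0) * |s n₀| ≤ B.N s := by
  have h := B.solid (fun k => if k = n₀ then s n₀ else 0) s hs
    (fun n => by by_cases h : n = n₀ <;> simp [h])
  have he : (fun k : ℤ => if k = n₀ then s n₀ else 0)
      = s n₀ • (fun k : ℤ => if k = n₀ then (1:ℝ) else 0) := by
    funext k; by_cases h : k = n₀ <;> simp [h]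
  have h2 := h.2
  rw [he, B.N_smul _ _ (B.indicator_mem n₀)] at h2
  calc B.N (fun k => if k = n₀ then (1:ℝ) else 0) * |s n₀|
      = |s n₀| * B.N (fun k => if k = n₀ then (1:ℝ) else 0) := mul_comm _ _
    _ ≤ B.N s := h2

lemma point_le (B : AdmissibleBSS) {x : ℤ → X} (hx : memXB B.toBanachSeqSpace x) (n₀ : ℤ) :
    B.N (fun k => if k = n₀ then (1:ℝ) else 0) * ‖x n₀‖ ≤ NXB B.toBanachSeqSpace x := by
  have h := abs_apply_le B hx n₀
  simpa [NXB] using h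

lemma banach_fixed_point (B : AdmissibleBSS) {X : Type*} [NormedAddCommGroup X]
    [NormedSpace ℝ X] [CompleteSpace X]
    (Φ : (ℤ → X) → (ℤ → X)) (q ε : ℝ) (hq0 : 0 ≤ q) (hq1 : q < 1) (hε : 0 ≤ ε)
    (hmap : ∀ w, memXB B.toBanachSeqSpace w → NXB B.toBanachSeqSpace w ≤ ε →
      memXB B.toBanachSeqSpace (Φ w) ∧ NXB B.toBanachSeqSpace (Φ w) ≤ ε)
    (hlip : ∀ w w', memXB B.toBanachSeqSpace w → memXB B.toBanachSeqSpace w' →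
      NXB B.toBanachSeqSpace (Φ w - Φ w') ≤ q * NXB B.toBanachSeqSpace (w - w')) :
    ∃ v, memXB B.toBanachSeqSpace v ∧ NXB B.toBanachSeqSpace v ≤ ε ∧ Φ v = v := by
  classical
  set 𝔅 := B.toBanachSeqSpace with h𝔅def
  set u : ℕ → (ℤ → X) := fun k => Φ^[k] 0 with hudef
  have hu0 : u 0 = 0 := rfl
  have husucc : ∀ k, u (k+1) = Φ (u k) := fun k => Function.iterate_succ_apply' Φ k 0
  have hS : ∀ k, memXB 𝔅 (u k) ∧ NXB 𝔅 (u k) ≤ ε := by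
    intro k; induction k with
    | zero => exact ⟨by rw [hu0]; exact memXB_zero 𝔅, by rw [hu0, NXB_zero]; exact hε⟩
    | succ k ih => rw [husucc]; exact hmap _ ih.1 ih.2
  set d0 := NXB 𝔅 (u 1 - u 0) with hd0def
  have hd0 : 0 ≤ d0 := NXB_nonneg _ _
  set C := d0 / (1 - q) with hCdef
  have hC : 0 ≤ C := div_nonneg hd0 (by linarith)
  have h1q : (1:ℝ) - q ≠ 0 := by intro h; linarith [h]
  have hkeyC : d0 ≤ (1 - q) * C := by
    rw [hCdef, mul_comm, div_mul_eq_mul_div, mul_div_assoc, div_self h1q, mul_one]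
  have hd : ∀ k, NXB 𝔅 (u (k+1) - u k) ≤ q ^ k * d0 := by
    intro k; induction k with
    | zero => simpa using le_rfl
    | succ k ih =>
      have h1 : u (k+1+1) - u (k+1) = Φ (u (k+1)) - Φ (u k) := by rw [husucc (k+1), husucc k]
      rw [h1]
      calc NXB 𝔅 (Φ (u (k+1)) - Φ (u k)) ≤ q * NXB 𝔅 (u (k+1) - u k) :=
            hlip _ _ (hS _).1 (hS _).1
        _ ≤ q * (q ^ k * d0) := mul_le_mul_of_nonneg_left ih hq0
        _ = q ^ (k+1) * d0 := by ring
  have htel : ∀ m k, NXB 𝔅 (u (k + m) - u k) ≤ q ^ k * C := by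
    intro m; induction m with
    | zero =>
      intro k
      have h : u (k + 0) - u k = (0 : ℤ → X) := by funext n; simp
      rw [h, NXB_zero]
      exact mul_nonneg (pow_nonneg hq0 k) hC
    | succ m ih =>
      intro k
      have he : k + (m+1) = (k+1) + m := by omega
      rw [he]
      have hsplit : u ((k+1) + m) - u k = (u ((k+1) + m) - u (k+1)) + (u (k+1) - u k) := by
        funext n; simp
      rw [hsplit]
      have hq2 : q ^ (k+1) * C + q ^ k * d0 ≤ q ^ k * C := by
        have h2 : q * C + d0 ≤ C := by nlinarith [hkeyC]
        calc q ^ (k+1) * C + q ^ k * d0 = q ^ k * (q * C + d0) := by ring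
          _ ≤ q ^ k * C := mul_le_mul_of_nonneg_left h2 (pow_nonneg hq0 k)
      calc NXB 𝔅 ((u ((k+1) + m) - u (k+1)) + (u (k+1) - u k))
          ≤ NXB 𝔅 (u ((k+1) + m) - u (k+1)) + NXB 𝔅 (u (k+1) - u k) :=
            NXB_add_le 𝔅 (memXB_sub 𝔅 (hS _).1 (hS _).1) (memXB_sub 𝔅 (hS _).1 (hS _).1)
        _ ≤ q ^ (k+1) * C + q ^ k * d0 := add_le_add (ih (k+1)) (hd k)
        _ ≤ q ^ k * C := hq2
  have hge : ∀ j k, k ≤ j → NXB 𝔅 (u j - u k) ≤ q ^ k * C := by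
    intro j k h
    obtain ⟨m, rfl⟩ := Nat.exists_eq_add_of_le h
    exact htel m k
  have hbnd : ∀ K j k, K ≤ j → K ≤ k → NXB 𝔅 (u j - u k) ≤ q ^ K * C := by
    intro K j k hj hk
    have hmono : ∀ a : ℕ, K ≤ a → q ^ a * C ≤ q ^ K * C := fun a ha =>
      mul_le_mul_of_nonneg_right (pow_le_pow_of_le_one hq0 hq1.le ha) hC
    rcases le_total k j with h | h
    · exact (hge j k h).trans (hmono k hk)
    · rw [NXB_sub_rev]; exact (hge k j h).trans (hmono j hj)
  have hten : Filter.Tendsto (fun K : ℕ => q ^ K * C) Filter.atTop (nhds 0) := by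
    simpa using (tendsto_pow_atTop_nhds_zero_of_lt_one hq0 hq1).mul_const C
  have hsmallK : ∀ η : ℝ, 0 < η → ∃ K : ℕ, q ^ K * C ≤ η := by
    intro η hη
    have h := hten.eventually (gt_mem_nhds hη)
    obtain ⟨K, hK⟩ := h.exists
    exact ⟨K, hK.le⟩
  set Ne : ℤ → ℝ := fun n => B.N (fun k => if k = n then (1:ℝ) else 0) with hNedef
  have hNe : ∀ n, 0 < Ne n := B.indicator_pos
  have hc : ∀ n : ℤ, ∃ l : X, Filter.Tendsto (fun k => u k n) Filter.atTop (nhds l) := by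
    intro n
    have hcs : CauchySeq (fun k => u k n) := by
      apply cauchySeq_of_le_tendsto_0 (fun K => q ^ K * C / Ne n)
      · intro j k K hj hk
        have h1 := point_le B (memXB_sub 𝔅 (hS j).1 (hS k).1) n
        have h2 := hbnd K j k hj hk
        rw [dist_eq_norm, le_div_iff₀ (hNe n)]
        have h3 : u j n - u k n = (u j - u k) n := rfl
        calc ‖u j n - u k n‖ * Ne n = Ne n * ‖(u j - u k) n‖ := by rw [h3]; ring
          _ ≤ NXB 𝔅 (u j - u k) := h1
          _ ≤ q ^ K * C := h2
      · simpa using hten.div_const (Ne n)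
    exact cauchySeq_tendsto_of_complete hcs
  choose v hv using hc
  have hkey : ∀ k, memXB 𝔅 (u k - v) ∧ NXB 𝔅 (u k - v) ≤ q ^ k * C := by
    intro k
    set tau : ℕ → ℤ → ℝ := fun j n => ‖u k n - u j n‖ with htaudef
    have hmemtau : ∀ j, 𝔅.mem (tau j) := fun j => memXB_sub 𝔅 (hS k).1 (hS j).1
    have hcauchy : ∀ η > (0:ℝ), ∃ K : ℕ, ∀ j ≥ K, ∀ j' ≥ K, 𝔅.N (tau j - tau j') ≤ η := by
      intro η hη
      obtain ⟨K, hK⟩ := hsmallK η hη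
      refine ⟨K, fun j hj j' hj' => ?_⟩
      have hdom := 𝔅.solid (tau j - tau j') (fun n => ‖(u j' - u j) n‖)
        (memXB_sub 𝔅 (hS j').1 (hS j).1)
        (fun n => by
          have h1 : |tau j n - tau j' n| ≤ ‖(u k n - u j n) - (u k n - u j' n)‖ :=
            abs_norm_sub_norm_le _ _
          have h2 : (u k n - u j n) - (u k n - u j' n) = u j' n - u j n := by abel
          rw [h2] at h1
          simpa using h1)
      exact hdom.2.trans ((hbnd K j' j hj' hj).trans hK)
    obtain ⟨τ, hτmem, hτlim⟩ := 𝔅.complete tau hmemtau hcauchy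
    have hτpt : ∀ n, τ n = ‖u k n - v n‖ := by
      intro n
      by_contra hne
      set η := |τ n - ‖u k n - v n‖| with hηdef
      have hηpos : 0 < η := abs_pos.2 (sub_ne_zero.2 hne)
      obtain ⟨K1, hK1⟩ := hτlim (η/3 * Ne n) (mul_pos (by linarith) (hNe n))
      have h2 := (hv n).eventually (Metric.ball_mem_nhds (v n) (show (0:ℝ) < η/3 by linarith))
      obtain ⟨K2, hK2⟩ := h2.exists_forall_of_atTop
      set j := max K1 K2 with hjdef
      have hj1 : K1 ≤ j := le_max_left _ _
      have hj2 : K2 ≤ j := le_max_right _ _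
      have ha : |tau j n - τ n| ≤ η/3 := by
        have hp := abs_apply_le B (𝔅.mem_sub (hmemtau j) hτmem) n
        have hb := hK1 j hj1
        have : Ne n * |(tau j - τ) n| ≤ η/3 * Ne n := le_trans hp hb
        have h4 : (tau j - τ) n = tau j n - τ n := rfl
        rw [h4, mul_comm] at this
        exact le_of_mul_le_mul_right this (hNe n)
      have hb : |tau j n - ‖u k n - v n‖| ≤ η/3 := by
        have h1 : |tau j n - ‖u k n - v n‖| ≤ ‖(u k n - u j n) - (u k n - v n)‖ :=
          abs_norm_sub_norm_le _ _
        have h2 : (u k n - u j n) - (u k n - v n) = v n - u j n := by abel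
        rw [h2] at h1
        have h3 := hK2 j hj2
        rw [dist_eq_norm] at h3
        calc |tau j n - ‖u k n - v n‖| ≤ ‖v n - u j n‖ := h1
          _ = ‖u j n - v n‖ := norm_sub_rev _ _
          _ ≤ η/3 := h3.le
      have : η ≤ 2 * (η/3) := by
        calc η = |τ n - ‖u k n - v n‖| := rfl
          _ ≤ |τ n - tau j n| + |tau j n - ‖u k n - v n‖| := abs_sub_le _ _ _
          _ = |tau j n - τ n| + |tau j n - ‖u k n - v n‖| := by rw [abs_sub_comm]
          _ ≤ η/3 + η/3 := add_le_add ha hb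
          _ = 2 * (η/3) := by ring
      linarith
    have hnorms : (fun n => ‖(u k - v) n‖) = τ := by
      funext n; rw [hτpt n]; rfl
    have hmem : memXB 𝔅 (u k - v) := by
      unfold memXB; rw [hnorms]; exact hτmem
    have hNeq : NXB 𝔅 (u k - v) = 𝔅.N τ := by
      unfold NXB; rw [hnorms]
    refine ⟨hmem, ?_⟩
    rw [hNeq]
    apply le_of_forall_pos_le_add
    intro η hη
    obtain ⟨K, hK⟩ := hτlim η hη
    set j := max k K with hjdef
    have hj1 : k ≤ j := le_max_left _ _
    have hj2 : K ≤ j := le_max_right _ _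
    have hsplit : τ = (τ - tau j) + tau j := by funext n; simp
    calc 𝔅.N τ = 𝔅.N ((τ - tau j) + tau j) := by rw [← hsplit]
      _ ≤ 𝔅.N (τ - tau j) + 𝔅.N (tau j) :=
          𝔅.N_add _ _ (𝔅.mem_sub hτmem (hmemtau j)) (hmemtau j)
      _ ≤ η + q ^ k * C := by
          have h1 : 𝔅.N (τ - tau j) ≤ η := by
            rw [𝔅.N_sub_rev hτmem (hmemtau j)]
            exact hK j hj2
          have h2 : 𝔅.N (tau j) ≤ q ^ k * C := by
            have h3 : 𝔅.N (tau j) = NXB 𝔅 (u k - u j) := rfl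
            rw [h3, NXB_sub_rev]
            exact hge j k hj1
          exact add_le_add h1 h2
      _ = q ^ k * C + η := add_comm _ _
  have hvmem : memXB 𝔅 v := by
    have h := (hkey 0).1
    have h2 : v = u 0 - (u 0 - v) := by funext n; simp
    rw [h2]; exact memXB_sub 𝔅 (hS 0).1 h
  have hvε : NXB 𝔅 v ≤ ε := by
    apply le_of_forall_pos_le_add
    intro η hη
    obtain ⟨K, hK⟩ := hsmallK η hη
    have hsplit : v = u K + (v - u K) := by funext n; simp
    calc NXB 𝔅 v = NXB 𝔅 (u K + (v - u K)) := by rw [← hsplit]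
      _ ≤ NXB 𝔅 (u K) + NXB 𝔅 (v - u K) :=
          NXB_add_le 𝔅 (hS K).1 (memXB_sub 𝔅 hvmem (hS K).1)
      _ ≤ ε + η := by
          refine add_le_add (hS K).2 ?_
          rw [NXB_sub_rev]
          exact ((hkey K).2).trans hK
  refine ⟨v, hvmem, hvε, ?_⟩
  have hΦvmem := (hmap v hvmem hvε).1
  have hmemd : memXB 𝔅 (Φ v - v) := memXB_sub 𝔅 hΦvmem hvmem
  have hle : ∀ η > (0:ℝ), NXB 𝔅 (Φ v - v) ≤ η := by
    intro η hη
    obtain ⟨K, hK⟩ := hsmallK (η/2) (by linarith)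
    have hsplit : Φ v - v = (Φ v - Φ (u K)) + (u (K+1) - v) := by
      funext n
      have h := husucc K
      simp [Pi.sub_apply, Pi.add_apply, h]
    rw [hsplit]
    calc NXB 𝔅 ((Φ v - Φ (u K)) + (u (K+1) - v))
        ≤ NXB 𝔅 (Φ v - Φ (u K)) + NXB 𝔅 (u (K+1) - v) :=
          NXB_add_le 𝔅 (memXB_sub 𝔅 hΦvmem (by rw [← husucc]; exact (hS (K+1)).1))
            (memXB_sub 𝔅 (hS (K+1)).1 hvmem)
      _ ≤ q * NXB 𝔅 (v - u K) + q ^ (K+1) * C := by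
          refine add_le_add (hlip _ _ hvmem (hS K).1) ((hkey (K+1)).2)
      _ ≤ q * (q ^ K * C) + q ^ (K+1) * C := by
          have h1 : NXB 𝔅 (v - u K) ≤ q ^ K * C := by
            rw [NXB_sub_rev]; exact (hkey K).2
          exact add_le_add (mul_le_mul_of_nonneg_left h1 hq0) le_rfl
      _ ≤ η/2 + η/2 := by
          have h1 : q * (q ^ K * C) ≤ q ^ K * C := by
            have := mul_le_mul_of_nonneg_right hq1.le (mul_nonneg (pow_nonneg hq0 K) hC)
            linarith
          have h2 : q ^ (K+1) * C ≤ q ^ K * C :=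
            mul_le_mul_of_nonneg_right (pow_le_pow_of_le_one hq0 hq1.le (Nat.le_succ K)) hC
          linarith
      _ = η := by ring
  have h0 : NXB 𝔅 (Φ v - v) ≤ 0 := by
    apply le_of_forall_pos_le_add
    intro η hη; simpa using hle η hη
  funext n
  have hp := point_le B hmemd n
  have hnn : ‖(Φ v - v) n‖ ≤ 0 := by
    have h5 : Ne n * ‖(Φ v - v) n‖ ≤ Ne n * 0 := by rw [mul_zero]; exact hp.trans h0
    exact le_of_mul_le_mul_left h5 (hNe n)
  have : (Φ v - v) n = 0 := norm_le_zero_iff.1 hnn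
  have h4 : Φ v n - v n = 0 := this
  exact sub_eq_zero.1 h4

/- STATEMENT 13: if (A_m) admits an exponential dichotomy (P_n^3 = 0) and 4cD‖G‖ < 1,
then there is L > 0 such that every (Lε, B)-pseudotrajectory is ε-shadowed by a unique
genuine solution of x_{n+1} = F_n(x_n). -/
theorem shadowing_exponential_dichotomy
    (X : Type*) [NormedAddCommGroup X] [NormedSpace ℝ X] [CompleteSpace X]
    (B : AdmissibleBSS) (A : ℤ → X →L[ℝ] X) (pd : PartialDichotomy A)
    -- exponential dichotomy: the central projections vanish
    (hP3 : ∀ n : ℤ, pd.P3 n = 0)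
    (c : ℝ) (hc : 0 ≤ c)
    (f : ℤ → X → X) (hf : ∀ (n : ℤ) (x y : X), ‖f n x - f n y‖ ≤ c * ‖x - y‖)
    (F : ℤ → X → X) (hF : ∀ (n : ℤ) (x : X), F n x = A n x + f n x)
    (𝔸 : (ℤ → X) → (ℤ → X))
    (h𝔸map : ∀ y, memXBsu B.toBanachSeqSpace pd y → memXBsu B.toBanachSeqSpace pd (𝔸 y))
    (h𝔸char : ∀ x y, memXBsu B.toBanachSeqSpace pd x → memXBsu B.toBanachSeqSpace pd y →
      (𝔸 y = x ↔ ∀ n : ℤ, x n - A (n - 1) (x (n - 1)) = y n))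
    (G : (ℤ → X) → (ℤ → X))
    (hG : ∀ x : ℤ → X, G x = -centr pd x + 𝔸 (stun pd x))
    (normG : ℝ) (hnormG0 : 0 < normG)
    (hnormG : ∀ x, memXB B.toBanachSeqSpace x →
      Nadapt B.toBanachSeqSpace pd (G x) ≤ normG * Nadapt B.toBanachSeqSpace pd x)
    (hsmall : 4 * c * pd.D * normG < 1) :
    ∃ L > (0 : ℝ), ∀ ε > (0 : ℝ), ∀ y : ℤ → X,
      memXB B.toBanachSeqSpace (fun n => y (n + 1) - F n (y n)) →
      NXB B.toBanachSeqSpace (fun n => y (n + 1) - F n (y n)) ≤ L * ε →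
      ∃! x : ℤ → X,
        memXB B.toBanachSeqSpace (x - y) ∧
        NXB B.toBanachSeqSpace (x - y) ≤ ε ∧
        ∀ n : ℤ, x (n + 1) = F n (x n) := by
  classical
  by_cases hsub : ∀ x : X, x = 0
  · -- trivial space
    refine ⟨1, one_pos, fun ε hε y hymem hyb => ?_⟩
    have hyy : y - y = (0 : ℤ → X) := by funext n; simp
    refine ⟨y, ⟨by rw [hyy]; exact memXB_zero _, by rw [hyy, NXB_zero]; exact hε.le,
      fun n => by rw [hsub (y (n+1)), hsub (F n (y n))]⟩, ?_⟩
    intro x _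
    funext n
    rw [hsub (x n), hsub (y n)]
  · -- nontrivial space: first D ≥ 1
    push_neg at hsub
    obtain ⟨x₀, hx₀⟩ := hsub
    have hD1 : (1:ℝ) ≤ pd.D := by
      have hsum := pd.sum_eq 0 x₀
      rw [hP3 0] at hsum
      simp only [ContinuousLinearMap.zero_apply, add_zero] at hsum
      have hP1n : ‖pd.P1 0‖ ≤ pd.D := by
        have h := pd.bound1 0 0
        simpa [fcoc] using h
      have hP2n : ‖pd.P2 0‖ ≤ pd.D := by
        have h := pd.bound2 0 0 le_rfl
        rw [pd.V_self] at h
        simpa using h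
      by_cases h1 : pd.P1 0 x₀ = 0
      · have h2 : pd.P2 0 x₀ ≠ 0 := by
          intro h; apply hx₀; rw [← hsum, h1, h, add_zero]
        have hproj : pd.P2 0 (pd.P2 0 x₀) = pd.P2 0 x₀ := by
          have := DFunLike.congr_fun (pd.proj2 0) x₀
          simpa [ContinuousLinearMap.comp_apply] using this
        have hb : ‖pd.P2 0 x₀‖ ≤ ‖pd.P2 0‖ * ‖pd.P2 0 x₀‖ := by
          conv_lhs => rw [← hproj]
          exact (pd.P2 0).le_opNorm _
        have hpos : 0 < ‖pd.P2 0 x₀‖ := norm_pos_iff.2 h2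
        nlinarith
      · have hproj : pd.P1 0 (pd.P1 0 x₀) = pd.P1 0 x₀ := by
          have := DFunLike.congr_fun (pd.proj1 0) x₀
          simpa [ContinuousLinearMap.comp_apply] using this
        have hb : ‖pd.P1 0 x₀‖ ≤ ‖pd.P1 0‖ * ‖pd.P1 0 x₀‖ := by
          conv_lhs => rw [← hproj]
          exact (pd.P1 0).le_opNorm _
        have hpos : 0 < ‖pd.P1 0 x₀‖ := norm_pos_iff.2 h1
        nlinarith
    have hq1 : c * normG < 1 := by
      rcases eq_or_lt_of_le hc with h | h
      · rw [← h, zero_mul]; exact one_pos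
      · nlinarith [mul_pos h hnormG0]
    set q : ℝ := c * normG with hqdef
    have hq0 : 0 ≤ q := mul_nonneg hc hnormG0.le
    set L : ℝ := (1 - q) / (2 * normG) with hLdef
    have hL : 0 < L := div_pos (by linarith) (by linarith)
    refine ⟨L, hL, fun ε hε y hqmem hqbnd => ?_⟩
    set 𝔅 := B.toBanachSeqSpace with h𝔅def
    -- general facts from hP3
    have hsu : ∀ z : ℤ → X, memXB 𝔅 z → memXBsu 𝔅 pd z := by
      intro z hz
      refine ⟨hz, fun n => ?_⟩
      have h := pd.sum_eq n (z n)
      rw [hP3 n] at h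
      simp only [ContinuousLinearMap.zero_apply, add_zero] at h
      exact h.symm
    have h𝔸map' : ∀ z : ℤ → X, memXB 𝔅 z → memXB 𝔅 (𝔸 z) :=
      fun z hz => (h𝔸map z (hsu z hz)).1
    have h𝔸char' : ∀ x z : ℤ → X, memXB 𝔅 x → memXB 𝔅 z →
        (𝔸 z = x ↔ ∀ n : ℤ, x n - A (n - 1) (x (n - 1)) = z n) :=
      fun x z hx hz => h𝔸char x z (hsu x hx) (hsu z hz)
    have hstun : ∀ z : ℤ → X, stun pd z = z := by
      intro z; funext n; simp [stun, hP3]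
    have hcentr : ∀ z : ℤ → X, centr pd z = 0 := by
      intro z; funext n; simp [centr, hP3]
    have hNad : ∀ z : ℤ → X, Nadapt 𝔅 pd z = NXB 𝔅 z := by
      intro z
      unfold Nadapt
      rw [hcentr, hstun, NXB_zero]
      exact max_eq_right (NXB_nonneg 𝔅 z)
    have hGeq : ∀ z : ℤ → X, G z = 𝔸 z := by
      intro z
      rw [hG, hstun, hcentr]
      funext n; simp
    have h𝔸norm : ∀ z, memXB 𝔅 z → NXB 𝔅 (𝔸 z) ≤ normG * NXB 𝔅 z := by
      intro z hz
      have h := hnormG z hz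
      rwa [hGeq, hNad, hNad] at h
    -- the shifted pseudotrajectory defect
    set p : ℤ → X := fun n => y n - F (n-1) (y (n-1)) with hpdef
    have hps : (fun n : ℤ => ‖p n‖)
        = (fun n : ℤ => (fun m : ℤ => ‖y (m+1) - F m (y m)‖) (n + (-1))) := by
      funext n
      show ‖p n‖ = ‖y (n + (-1) + 1) - F (n + (-1)) (y (n + (-1)))‖
      have h1 : n + (-1) + 1 = n := by ring
      have h2 : n + (-1) = n - 1 := by ring
      rw [h1, h2]
    have hpmem : memXB 𝔅 p := by
      unfold memXB; rw [hps]
      exact B.shift_mem _ (-1) hqmem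
    have hpN : NXB 𝔅 p ≤ L * ε := by
      unfold NXB; rw [hps]
      rw [B.shift_isometry _ (-1) hqmem]
      exact hqbnd
    -- the nonlinear operator
    set g : (ℤ → X) → (ℤ → X) :=
      fun w n => (f (n-1) (w (n-1) + y (n-1)) - f (n-1) (y (n-1))) - p n with hgdef
    set Φ : (ℤ → X) → (ℤ → X) := fun w => 𝔸 (g w) with hΦdef
    -- membership and bound for g
    have hgS : ∀ w : ℤ → X, memXB 𝔅 w →
        memXB 𝔅 (g w) ∧ NXB 𝔅 (g w) ≤ c * NXB 𝔅 w + L * ε := by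
      intro w hw
      have hshift : 𝔅.mem (fun n : ℤ => ‖w (n + (-1))‖) := B.shift_mem _ (-1) hw
      have hcs : 𝔅.mem (c • fun n : ℤ => ‖w (n + (-1))‖) := B.smul_mem _ _ hshift
      have hmt : 𝔅.mem ((c • fun n : ℤ => ‖w (n + (-1))‖) + fun n => ‖p n‖) :=
        𝔅.add_mem _ _ hcs hpmem
      have hdom := memXB_of_dom 𝔅 (g w) _ hmt (fun n => by
        have h2 : n + (-1) = n - 1 := by ring
        have hb1 : ‖g w n‖ ≤ ‖f (n-1) (w (n-1) + y (n-1)) - f (n-1) (y (n-1))‖ + ‖p n‖ :=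
          norm_sub_le _ _
        have hb2 : ‖f (n-1) (w (n-1) + y (n-1)) - f (n-1) (y (n-1))‖ ≤ c * ‖w (n-1)‖ := by
          have h := hf (n-1) (w (n-1) + y (n-1)) (y (n-1))
          simpa using h
        show ‖g w n‖ ≤ c * ‖w (n + (-1))‖ + ‖p n‖
        rw [h2]
        linarith)
      refine ⟨hdom.1, hdom.2.trans ?_⟩
      calc 𝔅.N ((c • fun n : ℤ => ‖w (n + (-1))‖) + fun n => ‖p n‖)
          ≤ 𝔅.N (c • fun n : ℤ => ‖w (n + (-1))‖) + 𝔅.N (fun n => ‖p n‖) :=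
            𝔅.N_add _ _ hcs hpmem
        _ = c * NXB 𝔅 w + NXB 𝔅 p := by
            rw [𝔅.N_smul _ _ hshift, B.shift_isometry _ (-1) hw, abs_of_nonneg hc]; rfl
        _ ≤ c * NXB 𝔅 w + L * ε := by linarith
    have hgdom : ∀ w w' : ℤ → X, memXB 𝔅 w → memXB 𝔅 w' →
        memXB 𝔅 (g w - g w') ∧ NXB 𝔅 (g w - g w') ≤ c * NXB 𝔅 (w - w') := by
      intro w w' hw hw'
      have hmemsub : 𝔅.mem (fun n => ‖(w - w') n‖) := memXB_sub 𝔅 hw hw'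
      have hshift : 𝔅.mem (fun n : ℤ => ‖(w - w') (n + (-1))‖) := B.shift_mem _ (-1) hmemsub
      have hcs : 𝔅.mem (c • fun n : ℤ => ‖(w - w') (n + (-1))‖) := B.smul_mem _ _ hshift
      have hdom := memXB_of_dom 𝔅 (g w - g w') _ hcs (fun n => by
        have h2 : n + (-1) = n - 1 := by ring
        have hcancel : (g w - g w') n
            = f (n-1) (w (n-1) + y (n-1)) - f (n-1) (w' (n-1) + y (n-1)) := by
          show g w n - g w' n = _
          simp only [hgdef]
          abel
        show ‖(g w - g w') n‖ ≤ c * ‖(w - w') (n + (-1))‖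
        rw [hcancel, h2]
        have h := hf (n-1) (w (n-1) + y (n-1)) (w' (n-1) + y (n-1))
        have h3 : w (n-1) + y (n-1) - (w' (n-1) + y (n-1)) = (w - w') (n-1) := by
          show _ = w (n-1) - w' (n-1)
          abel
        rwa [h3] at h)
      refine ⟨hdom.1, hdom.2.trans ?_⟩
      rw [𝔅.N_smul _ _ hshift, B.shift_isometry _ (-1) hmemsub, abs_of_nonneg hc]
      exact le_rfl
    have hΦmem : ∀ w, memXB 𝔅 w → memXB 𝔅 (Φ w) := by
      intro w hw
      rw [hΦdef]
      exact h𝔸map' _ (hgS w hw).1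
    have hΦrec : ∀ w, memXB 𝔅 w → ∀ n : ℤ, Φ w n - A (n-1) (Φ w (n-1)) = g w n := by
      intro w hw
      exact (h𝔸char' (Φ w) (g w) (hΦmem w hw) (hgS w hw).1).1 rfl
    have hΦlip : ∀ w w', memXB 𝔅 w → memXB 𝔅 w' →
        NXB 𝔅 (Φ w - Φ w') ≤ q * NXB 𝔅 (w - w') := by
      intro w w' hw hw'
      have hgd := hgdom w w' hw hw'
      have hmz : memXB 𝔅 (Φ w - Φ w') := memXB_sub 𝔅 (hΦmem w hw) (hΦmem w' hw')
      have heq : 𝔸 (g w - g w') = Φ w - Φ w' := by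
        rw [h𝔸char' _ _ hmz hgd.1]
        intro n
        have h1 := hΦrec w hw n
        have h2 := hΦrec w' hw' n
        have h3 : (Φ w - Φ w') n - A (n-1) ((Φ w - Φ w') (n-1))
            = (Φ w n - A (n-1) (Φ w (n-1))) - (Φ w' n - A (n-1) (Φ w' (n-1))) := by
          show Φ w n - Φ w' n - A (n-1) (Φ w (n-1) - Φ w' (n-1)) = _
          rw [map_sub]
          abel
        rw [h3, h1, h2]
        rfl
      calc NXB 𝔅 (Φ w - Φ w') = NXB 𝔅 (𝔸 (g w - g w')) := by rw [heq]
        _ ≤ normG * NXB 𝔅 (g w - g w') := h𝔸norm _ hgd.1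
        _ ≤ normG * (c * NXB 𝔅 (w - w')) :=
            mul_le_mul_of_nonneg_left hgd.2 hnormG0.le
        _ = q * NXB 𝔅 (w - w') := by rw [hqdef]; ring
    have hΦmap : ∀ w, memXB 𝔅 w → NXB 𝔅 w ≤ ε →
        memXB 𝔅 (Φ w) ∧ NXB 𝔅 (Φ w) ≤ ε := by
      intro w hw hwε
      refine ⟨hΦmem w hw, ?_⟩
      have h1 : NXB 𝔅 (Φ w) ≤ normG * NXB 𝔅 (g w) := by
        rw [hΦdef]
        exact h𝔸norm _ (hgS w hw).1
      have h2 : NXB 𝔅 (g w) ≤ c * ε + L * ε := by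
        have := (hgS w hw).2
        have h3 : c * NXB 𝔅 w ≤ c * ε := mul_le_mul_of_nonneg_left hwε hc
        linarith
      have hnL : normG * L = (1 - q) / 2 := by
        rw [hLdef]
        field_simp
      calc NXB 𝔅 (Φ w) ≤ normG * (c * ε + L * ε) :=
            h1.trans (mul_le_mul_of_nonneg_left h2 hnormG0.le)
        _ = q * ε + (normG * L) * ε := by rw [hqdef]; ring
        _ = q * ε + ((1 - q)/2) * ε := by rw [hnL]
        _ ≤ ε := by nlinarith
    -- apply the fixed point theorem
    obtain ⟨v, hvmem, hvε, hvfix⟩ :=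
      banach_fixed_point B Φ q ε hq0 hq1 hε.le hΦmap hΦlip
    -- the recurrence satisfied by v
    have hvrec : ∀ n : ℤ, v n - A (n-1) (v (n-1)) = g v n :=
      (h𝔸char' v (g v) hvmem (hgS v hvmem).1).1 hvfix
    -- the shadowing solution
    refine ⟨v + y, ⟨?_, ?_, ?_⟩, ?_⟩
    · have h : (v + y) - y = v := by funext n; simp
      rw [h]; exact hvmem
    · have h : (v + y) - y = v := by funext n; simp
      rw [h]; exact hvε
    · intro n
      have h := hvrec (n+1)
      have e1 : (n:ℤ) + 1 - 1 = n := by ring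
      simp only [hgdef, hpdef] at h
      rw [e1] at h
      rw [hF n (y n)] at h
      have h2 := eq_add_of_sub_eq h
      show v (n+1) + y (n+1) = F n (v n + y n)
      rw [hF n (v n + y n), map_add, h2]
      abel
    · -- uniqueness
      intro x' hx'
      obtain ⟨hm', hb', hs'⟩ := hx'
      have hrec' : ∀ n : ℤ, (x' - y) n - A (n-1) ((x' - y) (n-1)) = g (x' - y) n := by
        intro n
        have h := hs' (n - 1)
        have e1 : n - 1 + 1 = n := by ring
        rw [e1] at h
        show (x' n - y n) - A (n-1) (x' (n-1) - y (n-1)) = _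
        simp only [hgdef]
        have e2 : (x' - y) (n-1) + y (n-1) = x' (n-1) := by
          show x' (n-1) - y (n-1) + y (n-1) = x' (n-1); abel
        rw [e2, h, hF (n-1) (x' (n-1)), map_sub]
        simp only [hpdef]
        rw [hF (n-1) (y (n-1))]
        abel
      have hfix' : Φ (x' - y) = x' - y := by
        rw [hΦdef]
        exact (h𝔸char' (x' - y) (g (x' - y)) hm' (hgS _ hm').1).2 hrec'
      have hd : NXB 𝔅 ((x' - y) - v) ≤ q * NXB 𝔅 ((x' - y) - v) := by
        have h := hΦlip (x' - y) v hm' hvmem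
        rwa [hfix', hvfix] at h
      have hd0 : NXB 𝔅 ((x' - y) - v) ≤ 0 := by
        have hnn := NXB_nonneg 𝔅 ((x' - y) - v)
        nlinarith
      have hmemd : memXB 𝔅 ((x' - y) - v) := memXB_sub 𝔅 hm' hvmem
      funext n
      have hp := point_le B hmemd n
      have hNe := B.indicator_pos n
      have hnn : ‖((x' - y) - v) n‖ ≤ 0 := by
        have h5 : B.N (fun k => if k = n then (1:ℝ) else 0) * ‖((x' - y) - v) n‖
            ≤ B.N (fun k => if k = n then (1:ℝ) else 0) * 0 := by
          rw [mul_zero]; exact hp.trans hd0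
        exact le_of_mul_le_mul_left h5 hNe
      have h6 : ((x' - y) - v) n = 0 := norm_le_zero_iff.1 hnn
      have h7 : x' n - y n - v n = 0 := h6
      show x' n = v n + y n
      have h8 : x' n - y n = v n := sub_eq_zero.1 h7
      rw [← h8]; abel
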